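/- If all arms in a two-sided matching market share the same strict preference ordering over players (serial dictatorship on the arm side), and there are equal numbers M of players and arms with each player having a strict preference order over all arms, then there exists exactly one stable matching. -/

import Mathlib

/-- A matching (bijection) `m` is stable if it admits no blocking pair: no player `i`
and arm `k ≠ m i` such that `i` prefers `k` to `m i` and `k` prefers `i` to `m⁻¹ k`. -/
def IsStableMatching {P A : Type*} (prefP : P → A → A → Prop)
    (prefA : A → P → P → Prop) (m : P ≃ A) : Prop :=
  ¬ ∃ (i : P) (k : A), k ≠ m i ∧ prefP i k (m i) ∧ prefA k i (m.symm k)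

open Classical

/-- Extend a bijection on punctured types to the full types, sending `i0 ↦ a0`. -/
noncomputable def extEquiv {P A : Type*} (i0 : P) (a0 : A)
    (m' : {j : P // j ≠ i0} ≃ {b : A // b ≠ a0}) : P ≃ A where
  toFun j := if h : j = i0 then a0 else (m' ⟨j, h⟩).1
  invFun b := if h : b = a0 then i0 else (m'.symm ⟨b, h⟩).1
  left_inv j := by
    by_cases h : j = i0
    · simp [h]
    · simp only [dif_neg h, dif_neg (m' ⟨j, h⟩).2]
      have : (⟨(m' ⟨j, h⟩).1, (m' ⟨j, h⟩).2⟩ : {b : A // b ≠ a0}) = m' ⟨j, h⟩ := rfl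
      rw [this, Equiv.symm_apply_apply]
  right_inv b := by
    by_cases h : b = a0
    · simp [h]
    · simp only [dif_neg h, dif_neg (m'.symm ⟨b, h⟩).2]
      have : (⟨(m'.symm ⟨b, h⟩).1, (m'.symm ⟨b, h⟩).2⟩ : {j : P // j ≠ i0}) = m'.symm ⟨b, h⟩ := rfl
      rw [this, Equiv.apply_symm_apply]

theorem aux_stmt (n : ℕ) : ∀ {P : Type u} {A : Type v} [Fintype P] [Fintype A],
    Fintype.card P = n → Fintype.card A = n →
    ∀ (prefP : P → A → A → Prop), (∀ i, IsStrictTotalOrder A (prefP i)) →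
    ∀ (r : P → P → Prop), IsStrictTotalOrder P r →
    ∃! m : P ≃ A, IsStableMatching prefP (fun _ => r) m := by
  induction n with
  | zero =>
    intro P A _ _ hP hA prefP hprefP r hr
    haveI : IsEmpty P := Fintype.card_eq_zero_iff.mp hP
    haveI : IsEmpty A := Fintype.card_eq_zero_iff.mp hA
    refine ⟨Equiv.equivOfIsEmpty P A, ?_, ?_⟩
    · rintro ⟨i, -⟩; exact isEmptyElim i
    · intro m _; exact Equiv.ext fun j => isEmptyElim j
  | succ n ih =>
    intro P A _ _ hP hA prefP hprefP r hr
    haveI : Nonempty P := Fintype.card_pos_iff.mp (hP ▸ n.succ_pos)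
    haveI := hr
    -- the best player
    obtain ⟨i0, -, hrmin⟩ := (Finite.wellFounded_of_trans_of_irrefl r).has_min
      Set.univ ⟨Classical.arbitrary P, trivial⟩
    have hrmin : ∀ j, ¬ r j i0 := fun j => hrmin j trivial
    have hi0 : ∀ j, j ≠ i0 → r i0 j := fun j hj => by
      rcases trichotomous_of r i0 j with h | h | h
      · exact h
      · exact absurd h.symm hj
      · exact absurd h (hrmin j)
    haveI : Nonempty A := Fintype.card_pos_iff.mp (hA ▸ n.succ_pos)
    haveI := hprefP i0
    -- i0's favorite arm
    obtain ⟨a0, -, hamin⟩ := (Finite.wellFounded_of_trans_of_irrefl (prefP i0)).has_min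
      Set.univ ⟨Classical.arbitrary A, trivial⟩
    have hamin : ∀ b, ¬ prefP i0 b a0 := fun b => hamin b trivial
    have ha0 : ∀ b, b ≠ a0 → prefP i0 a0 b := fun b hb => by
      rcases trichotomous_of (prefP i0) a0 b with h | h | h
      · exact h
      · exact absurd h.symm hb
      · exact absurd h (hamin b)
    -- any stable matching sends i0 to a0
    have key : ∀ m : P ≃ A, IsStableMatching prefP (fun _ => r) m → m i0 = a0 := by
      intro m hm
      by_contra h
      exact hm ⟨i0, a0, fun e => h e.symm, ha0 _ h,
        hi0 _ fun e => h (by rw [← e, Equiv.apply_symm_apply])⟩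
    -- restricted data
    set P' := {j : P // j ≠ i0} with hP'def
    set A' := {b : A // b ≠ a0} with hA'def
    have hcP' : Fintype.card P' = n := by
      have e : Fintype.card P' = Fintype.card P - 1 := by
        simp [hP'def, Fintype.card_subtype_compl]
      omega
    have hcA' : Fintype.card A' = n := by
      have e : Fintype.card A' = Fintype.card A - 1 := by
        simp [hA'def, Fintype.card_subtype_compl]
      omega
    set prefP' : P' → A' → A' → Prop := fun j b c => prefP j.1 b.1 c.1 with hprefP'def
    set r' : P' → P' → Prop := fun j k => r j.1 k.1 with hr'def
    have hprefP' : ∀ j, IsStrictTotalOrder A' (prefP' j) := fun j =>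
      { trichotomous := fun b c => by
          intro h1 h2
          rcases (letI := hprefP j.1; trichotomous_of (prefP j.1) b.1 c.1) with h | h | h
          · exact absurd h h1
          · exact Subtype.ext h
          · exact absurd h h2
        irrefl := fun b => (hprefP j.1).irrefl b.1
        trans := fun b c d h1 h2 => (hprefP j.1).trans _ _ _ h1 h2 }
    have hr' : IsStrictTotalOrder P' r' :=
      { trichotomous := fun b c => by
          intro h1 h2
          rcases trichotomous_of r b.1 c.1 with h | h | h
          · exact absurd h h1
          · exact Subtype.ext h
          · exact absurd h h2
        irrefl := fun b => hr.irrefl b.1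
        trans := fun b c d h1 h2 => hr.trans _ _ _ h1 h2 }
    obtain ⟨m'₀, hm'₀, hm'₀uniq⟩ := ih hcP' hcA' prefP' hprefP' r' hr'
    -- computation lemmas for extEquiv
    set m₀ : P ≃ A := extEquiv i0 a0 m'₀ with hm₀def
    have hm₀i0 : m₀ i0 = a0 := dif_pos rfl
    have hm₀ne : ∀ (j : P) (h : j ≠ i0), m₀ j = (m'₀ ⟨j, h⟩).1 := fun j h => dif_neg h
    have hm₀symm : ∀ (b : A) (h : b ≠ a0), m₀.symm b = (m'₀.symm ⟨b, h⟩).1 :=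
      fun b h => dif_neg h
    have hm₀symma0 : m₀.symm a0 = i0 := dif_pos rfl
    refine ⟨m₀, ?_, ?_⟩
    · -- m₀ is stable
      rintro ⟨j, b, h1, h2, h3⟩
      by_cases hj : j = i0
      · subst hj
        rw [hm₀i0] at h1 h2
        exact hamin b h2
      · by_cases hb : b = a0
        · subst hb
          rw [hm₀symma0] at h3
          exact hrmin j h3
        · refine hm'₀ ⟨⟨j, hj⟩, ⟨b, hb⟩, ?_, ?_, ?_⟩
          · intro e
            exact h1 (by rw [hm₀ne j hj, ← e])
          · show prefP j b (m'₀ ⟨j, hj⟩).1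
            rwa [← hm₀ne j hj]
          · show r j (m'₀.symm ⟨b, hb⟩).1
            rwa [hm₀symm b hb] at h3
    · -- uniqueness
      intro m hm
      have hmi0 : m i0 = a0 := key m hm
      -- restriction of m
      have hiff : ∀ j : P, j ≠ i0 ↔ m j ≠ a0 := fun j =>
        ⟨fun hj e => hj (m.injective (e.trans hmi0.symm)),
         fun e hj => e (hj ▸ hmi0)⟩
      set m' : P' ≃ A' := m.subtypeEquiv hiff with hm'def
      have hm'val : ∀ j : P', (m' j).1 = m j.1 := fun j => rfl
      have hm'symmval : ∀ b : A', (m'.symm b).1 = m.symm b.1 := by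
        intro b
        apply m.injective
        have : m' (m'.symm b) = b := m'.apply_symm_apply b
        have := congrArg Subtype.val this
        rw [hm'val] at this
        rw [this, Equiv.apply_symm_apply]
      -- m' is stable
      have hm'stable : IsStableMatching prefP' (fun _ => r') m' := by
        rintro ⟨j, b, h1, h2, h3⟩
        refine hm ⟨j.1, b.1, ?_, ?_, ?_⟩
        · intro e
          exact h1 (Subtype.ext (by rw [hm'val, ← e]))
        · show prefP j.1 b.1 (m j.1)
          rwa [← hm'val]
        · have h3' : r j.1 (m'.symm b).1 := h3
          rwa [hm'symmval] at h3'
      have : m' = m'₀ := hm'₀uniq m' hm'stable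
      -- conclude m = m₀
      refine Equiv.ext fun j => ?_
      by_cases hj : j = i0
      · subst hj; rw [hmi0, hm₀i0]
      · rw [hm₀ne j hj, ← this, hm'val]

theorem stmt_1 {P A : Type*} [Fintype P] [Fintype A]
    (hcard : Fintype.card P = Fintype.card A)
    (prefP : P → A → A → Prop) (hprefP : ∀ i, IsStrictTotalOrder A (prefP i))
    (r : P → P → Prop) (hr : IsStrictTotalOrder P r) :
    ∃! m : P ≃ A, IsStableMatching prefP (fun _ => r) m :=
  aux_stmt (Fintype.card P) rfl hcard.symm prefP hprefP r hr
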